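/- Let M be a von Neumann algebra, φ a faithful normal state with GNS triple (H_φ, π_φ, Ω_φ), and R a σ_t^φ-invariant von Neumann subalgebra. Let H₀ and K₀ be the closures of π_φ(R)Ω_φ and π_φ(R^⊥φ)Ω_φ respectively. Then H_φ = H₀ ⊕ K₀ (orthogonal direct sum) and the orthogonal projection P₀ onto H₀ belongs to the commutant π_φ(R)'. -/

import Mathlib

open scoped ComplexOrder

section
variable {M : Type*} [NormedRing M] [StarRing M] [CStarRing M] [NormedAlgebra ℂ M]
  [StarModule ℂ M] [CompleteSpace M] [PartialOrder M] [StarOrderedRing M]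

/-- The multiplicative domain of a linear map `Φ`. -/
def multDomain (Φ : Module.End ℂ M) : Set M :=
  {a : M | Φ (star a * a) = Φ (star a) * Φ a ∧ Φ (a * star a) = Φ a * Φ (star a)}

/-- `φ` is a state: unital and positive. -/
def IsState (φ : M →ₗ[ℂ] ℂ) : Prop :=
  φ 1 = 1 ∧ ∀ a : M, 0 ≤ φ (star a * a)

/-- `φ` is faithful. -/
def IsFaithful (φ : M →ₗ[ℂ] ℂ) : Prop :=
  ∀ a : M, φ (star a * a) = 0 → a = 0

/-- `Φ` is a unital Schwartz map. -/
def IsSchwartz (Φ : Module.End ℂ M) : Prop :=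
  Φ 1 = 1 ∧ ∀ a : M, star (Φ a) * Φ a ≤ Φ (star a * a)

/-- The `φ`-orthogonal complement of a set `R`. -/
def phiPerp (φ : M →ₗ[ℂ] ℂ) (R : Set M) : Set M :=
  {a : M | ∀ x ∈ R, φ (star a * x) = 0}


variable {H : Type*} [NormedAddCommGroup H] [InnerProductSpace ℂ H] [CompleteSpace H]

/-- for a modular-invariant subalgebra `R` (expressed through the induced
decomposition `M = R ⊕ R^⊥φ`), the GNS space splits orthogonally as `H_φ = H₀ ⊕ K₀`
and the orthogonal projection `P₀` onto `H₀` lies in the commutant `π_φ(R)'`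
(equivalently, both `H₀` and `H₀ᗮ` are invariant under `π_φ(R)`). -/
theorem gns_orthogonal_splitting
    (π : M →⋆ₐ[ℂ] (H →L[ℂ] H)) (Ω : H) (φ : M →ₗ[ℂ] ℂ)
    (hφdef : ∀ a : M, φ a = inner (𝕜 := ℂ) Ω (π a Ω))
    (hcyclic : Dense (Submodule.span ℂ (Set.range fun a : M => π a Ω) : Set H))
    (hφ : IsState φ) (hfaith : IsFaithful φ)
    (R : StarSubalgebra ℂ M)
    (hstar : ∀ a ∈ phiPerp φ (R : Set M), star a ∈ phiPerp φ (R : Set M))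
    (hdec : ∀ a : M, ∃ r ∈ R, ∃ p ∈ phiPerp φ (R : Set M), a = r + p) :
    (((Submodule.span ℂ ((fun r : M => π r Ω) '' (R : Set M))).topologicalClosure)ᗮ
        = (Submodule.span ℂ ((fun r : M => π r Ω) '' phiPerp φ (R : Set M))).topologicalClosure) ∧
    (∀ r ∈ R, ∀ ψ ∈ (Submodule.span ℂ ((fun r : M => π r Ω) '' (R : Set M))).topologicalClosure,
        π r ψ ∈ (Submodule.span ℂ ((fun r : M => π r Ω) '' (R : Set M))).topologicalClosure) ∧
    (∀ r ∈ R, ∀ ψ ∈ ((Submodule.span ℂ ((fun r : M => π r Ω) '' (R : Set M))).topologicalClosure)ᗮ,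
        π r ψ ∈ ((Submodule.span ℂ ((fun r : M => π r Ω) '' (R : Set M))).topologicalClosure)ᗮ) := by
  set S : Submodule ℂ H := Submodule.span ℂ ((fun r : M => π r Ω) '' (R : Set M)) with hS
  set T : Submodule ℂ H :=
    Submodule.span ℂ ((fun r : M => π r Ω) '' phiPerp φ (R : Set M)) with hT
  -- inner product formula
  have hadj : ∀ a : M, ContinuousLinearMap.adjoint (π a) = π (star a) := by
    intro a
    rw [← ContinuousLinearMap.star_eq_adjoint, ← map_star]
  have hinner : ∀ a b : M, inner (𝕜 := ℂ) (π a Ω) (π b Ω) = φ (star a * b) := by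
    intro a b
    rw [hφdef, map_mul, ← hadj, ContinuousLinearMap.mul_apply,
      ContinuousLinearMap.adjoint_inner_right]
  -- orthogonality of the generators
  have horth : ∀ r ∈ (R : Set M), ∀ p ∈ phiPerp φ (R : Set M),
      inner (𝕜 := ℂ) (π p Ω) (π r Ω) = 0 := by
    intro r hr p hp
    rw [hinner]
    exact hp r hr
  have horth' : ∀ r ∈ (R : Set M), ∀ p ∈ phiPerp φ (R : Set M),
      inner (𝕜 := ℂ) (π r Ω) (π p Ω) = 0 := by
    intro r hr p hp
    rw [← inner_conj_symm, horth r hr p hp, map_zero]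
  -- T ≤ Sᗮ
  have hTS : T ≤ Sᗮ := by
    rw [hT, Submodule.span_le]
    rintro _ ⟨p, hp, rfl⟩
    rw [SetLike.mem_coe, Submodule.mem_orthogonal']
    intro u hu
    induction hu using Submodule.span_induction with
    | mem x hx =>
      obtain ⟨r, hr, rfl⟩ := hx
      exact horth r hr p hp
    | zero => simp
    | add x y _ _ hx hy => rw [inner_add_right, hx, hy, add_zero]
    | smul c x _ hx => rw [inner_smul_right, hx, mul_zero]
  have hST : S ≤ Tᗮ := le_trans (Submodule.le_orthogonal_orthogonal S)
    (Submodule.orthogonal_le hTS)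
  -- density of S ⊔ T
  have hsupdense : (S ⊔ T).topologicalClosure = ⊤ := by
    rw [eq_top_iff]
    have h1 : Submodule.span ℂ (Set.range fun a : M => π a Ω) ≤ S ⊔ T := by
      rw [Submodule.span_le]
      rintro _ ⟨a, rfl⟩
      obtain ⟨r, hr, p, hp, rfl⟩ := hdec a
      have : π (r + p) Ω = π r Ω + π p Ω := by rw [map_add]; rfl
      show (π (r + p)) Ω ∈ S ⊔ T
      rw [this]
      exact Submodule.add_mem _
        (Submodule.mem_sup_left (Submodule.subset_span ⟨r, hr, rfl⟩))
        (Submodule.mem_sup_right (Submodule.subset_span ⟨p, hp, rfl⟩))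
    calc ⊤ = (Submodule.span ℂ (Set.range fun a : M => π a Ω)).topologicalClosure :=
            (Submodule.dense_iff_topologicalClosure_eq_top.mp hcyclic).symm
      _ ≤ (S ⊔ T).topologicalClosure := Submodule.topologicalClosure_mono h1
  have hbot : Sᗮ ⊓ Tᗮ = ⊥ := by
    rw [Submodule.inf_orthogonal, ← Submodule.topologicalClosure_eq_top_iff]
    exact hsupdense
  -- invariance of S (algebraic level)
  have hmapS : ∀ r ∈ R, ∀ u ∈ S, π r u ∈ S := by
    intro r hr u hu
    induction hu using Submodule.span_induction with
    | mem x hx =>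
      obtain ⟨s, hs, rfl⟩ := hx
      have : π r (π s Ω) = π (r * s) Ω := by rw [map_mul]; rfl
      rw [this]
      exact Submodule.subset_span ⟨r * s, R.mul_mem hr hs, rfl⟩
    | zero => simp
    | add x y _ _ hx hy => rw [map_add]; exact Submodule.add_mem S hx hy
    | smul c x _ hx => rw [map_smul]; exact Submodule.smul_mem S c hx
  -- invariance of the closure of S
  have hinv : ∀ r ∈ R, ∀ ψ ∈ S.topologicalClosure, π r ψ ∈ S.topologicalClosure := by
    intro r hr ψ hψ
    rw [← SetLike.mem_coe, Submodule.topologicalClosure_coe] at hψ ⊢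
    exact map_mem_closure (π r).continuous hψ (fun u hu => hmapS r hr u hu)
  -- identification of orthogonals of closures
  have hSperp : (S.topologicalClosure)ᗮ = Sᗮ := by
    rw [← Submodule.orthogonal_orthogonal_eq_closure, Submodule.triorthogonal_eq_orthogonal]
  -- the key inclusion Tᗮ ≤ Sᗮᗮ via orthogonal projection
  haveI : CompleteSpace (Sᗮᗮ : Submodule ℂ H) :=
    (Sᗮ).isClosed_orthogonal.completeSpace_coe
  haveI : Submodule.HasOrthogonalProjection (Sᗮᗮ : Submodule ℂ H) :=
    Submodule.HasOrthogonalProjection.ofCompleteSpace _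
  have hTSperp : Tᗮ ≤ Sᗮᗮ := by
    intro χ hχ
    obtain ⟨y, hy, z, hz, hyz⟩ := (Sᗮᗮ).exists_add_mem_mem_orthogonal χ
    rw [Submodule.triorthogonal_eq_orthogonal] at hz
    have hyT : y ∈ Tᗮ := by
      have : Sᗮᗮ ≤ Tᗮ := Submodule.orthogonal_le hTS
      exact this hy
    have hzT : z ∈ Tᗮ := by
      have : z = χ - y := by rw [hyz]; abel
      rw [this]; exact Submodule.sub_mem _ hχ hyT
    have : z = 0 := by
      have : z ∈ Sᗮ ⊓ Tᗮ := ⟨hz, hzT⟩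
      rwa [hbot, Submodule.mem_bot] at this
    rw [hyz, this, add_zero]
    exact hy
  -- first conjunct
  have hmain : (S.topologicalClosure)ᗮ = T.topologicalClosure := by
    rw [hSperp, ← Submodule.orthogonal_orthogonal_eq_closure]
    apply le_antisymm
    · intro ψ hψ
      rw [Submodule.mem_orthogonal]
      intro u hu
      have hu' : u ∈ Sᗮᗮ := hTSperp hu
      rw [Submodule.mem_orthogonal] at hu'
      rw [← inner_conj_symm, hu' ψ hψ, map_zero]
    · exact Submodule.orthogonal_le hST
  refine ⟨hmain, hinv, ?_⟩
  -- invariance of the orthogonal complement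
  intro r hr ψ hψ
  rw [Submodule.mem_orthogonal] at hψ ⊢
  intro u hu
  have h1 : inner (𝕜 := ℂ) u (π r ψ) =
      inner (𝕜 := ℂ) (ContinuousLinearMap.adjoint (π r) u) ψ := by
    rw [ContinuousLinearMap.adjoint_inner_left]
  rw [h1, hadj]
  exact hψ _ (hinv (star r) (star_mem hr) u hu)


end
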